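/- Let h : ℝⁿ → ℝ ∪ {∞} be proper, lsc, and σ-strongly convex, and let C ∈ ℝ^{p×n}. Then the image function (Ch)(s) := inf{ h(x) : Cx = s } is (σ/‖C‖²)-strongly convex. -/

import Mathlib

open Set Filter

/-- A proper, lsc, strongly convex function is bounded below. -/
lemma aux_bddBelow_of_strconv {n : ℕ} (h : EuclideanSpace ℝ (Fin n) → EReal) (σ : ℝ)
    (hσ : 0 < σ)
    (hproper : ∃ x, h x ≠ ⊤) (hbot : ∀ x, h x ≠ ⊥) (hlsc : LowerSemicontinuous h)
    (hstrconv : ∀ (x y : EuclideanSpace ℝ (Fin n)) (a b : ℝ), 0 ≤ a → 0 ≤ b → a + b = 1 →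
      h (a • x + b • y) + ((σ / 2 * (a * b) * ‖x - y‖ ^ 2 : ℝ) : EReal)
        ≤ ((a : ℝ) : EReal) * h x + ((b : ℝ) : EReal) * h y) :
    ∃ m : ℝ, ∀ y, (m : EReal) ≤ h y := by
  obtain ⟨x₀, hx₀⟩ := hproper
  set c₀ : ℝ := (h x₀).toReal with hc₀def
  have hc₀ : h x₀ = (c₀ : EReal) := (EReal.coe_toReal hx₀ (hbot x₀)).symm
  have hlt : ((c₀ - 1 : ℝ) : EReal) < h x₀ := by
    rw [hc₀]; exact_mod_cast (by linarith : c₀ - 1 < c₀)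
  have hev := hlsc x₀ _ hlt
  rw [Metric.eventually_nhds_iff] at hev
  obtain ⟨δ, hδ, hball⟩ := hev
  refine ⟨min (c₀ - 1) (c₀ - 4 / (σ * δ ^ 2)), fun y => ?_⟩
  by_cases hytop : h y = ⊤
  · rw [hytop]; exact le_top
  set w : ℝ := (h y).toReal with hwdef
  have hw : h y = (w : EReal) := (EReal.coe_toReal hytop (hbot y)).symm
  rw [hw]
  rw [EReal.coe_le_coe_iff]
  set d : ℝ := dist y x₀ with hddef
  by_cases hd : d < δ
  · have : h y > ((c₀ - 1 : ℝ) : EReal) := hball hd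
    rw [hw] at this
    have : c₀ - 1 < w := EReal.coe_lt_coe_iff.mp this
    exact le_trans (min_le_left _ _) this.le
  push_neg at hd
  have hdpos : 0 < d := lt_of_lt_of_le hδ hd
  set t : ℝ := δ / (2 * d) with htdef
  have htpos : 0 < t := by positivity
  have ht : 2 * d * t = δ := by rw [htdef]; field_simp [hdpos.ne']
  have ht2 : t ≤ 1 / 2 := by
    rw [htdef, div_le_div_iff₀ (by positivity) (by norm_num)]
    linarith
  set z : EuclideanSpace ℝ (Fin n) := (1 - t) • x₀ + t • y with hzdef
  have hzx₀ : dist z x₀ < δ := by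
    have : z - x₀ = t • (y - x₀) := by
      rw [hzdef]; module
    rw [dist_eq_norm, this, norm_smul, Real.norm_eq_abs, abs_of_pos htpos,
      ← dist_eq_norm, ← hddef]
    rw [htdef]
    rw [div_mul_eq_mul_div, mul_comm, mul_div_assoc]
    nlinarith
  have hz := hball hzx₀
  have hsc := hstrconv x₀ y (1 - t) t (by linarith) htpos.le (by ring)
  rw [← hzdef, hc₀, hw] at hsc
  have hnorm : ‖x₀ - y‖ = d := by rw [← dist_eq_norm, dist_comm, hddef]
  rw [hnorm, ← EReal.coe_mul, ← EReal.coe_mul, ← EReal.coe_add] at hsc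
  -- lower bound the LHS of hsc
  have hlhs : ((c₀ - 1 + σ / 2 * ((1 - t) * t) * d ^ 2 : ℝ) : EReal)
      ≤ h z + ((σ / 2 * ((1 - t) * t) * d ^ 2 : ℝ) : EReal) := by
    rw [EReal.coe_add]
    exact add_le_add hz.le le_rfl
  have hreal : c₀ - 1 + σ / 2 * ((1 - t) * t) * d ^ 2 ≤ (1 - t) * c₀ + t * w :=
    EReal.coe_le_coe_iff.mp (le_trans hlhs hsc)
  -- derive the quadratic bound
  have key : σ * δ ^ 2 * (c₀ - w) ≤ 4 := by
    have hδ2 : δ ^ 2 = 4 * d ^ 2 * t ^ 2 := by rw [← ht]; ring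
    have hmul : σ * d ^ 2 * t * (c₀ - 1 + σ / 2 * ((1 - t) * t) * d ^ 2)
        ≤ σ * d ^ 2 * t * ((1 - t) * c₀ + t * w) :=
      mul_le_mul_of_nonneg_left hreal (by positivity)
    rw [hδ2]
    nlinarith [hmul, sq_nonneg (2 - σ * d ^ 2 * t),
      mul_nonneg (by linarith : (0:ℝ) ≤ 1 - 2 * t) (by positivity : (0:ℝ) ≤ (σ * d ^ 2 * t) ^ 2)]
  have : c₀ - w ≤ 4 / (σ * δ ^ 2) := by
    rw [le_div_iff₀ (by positivity)]
    linarith [key]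
  have : c₀ - 4 / (σ * δ ^ 2) ≤ w := by linarith
  exact le_trans (min_le_right _ _) this

/-- if `h : ℝⁿ → ℝ ∪ {∞}` is proper, lsc and `σ`-strongly convex and
`C : ℝⁿ → ℝᵖ` is linear, then the image function `(Ch)(s) = inf {h x : Cx = s}` is
`(σ/‖C‖²)`-strongly convex (strong convexity expressed through the standard secant
inequality, valid also for extended-real-valued functions). -/
theorem image_function_strongly_convex {n p : ℕ}
    (h : EuclideanSpace ℝ (Fin n) → EReal)
    (C : EuclideanSpace ℝ (Fin n) →L[ℝ] EuclideanSpace ℝ (Fin p)) (σ : ℝ) (hσ : 0 < σ)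
    (hproper : ∃ x, h x ≠ ⊤) (hbot : ∀ x, h x ≠ ⊥) (hlsc : LowerSemicontinuous h)
    (hstrconv : ∀ (x y : EuclideanSpace ℝ (Fin n)) (a b : ℝ), 0 ≤ a → 0 ≤ b → a + b = 1 →
      h (a • x + b • y) + ((σ / 2 * (a * b) * ‖x - y‖ ^ 2 : ℝ) : EReal)
        ≤ ((a : ℝ) : EReal) * h x + ((b : ℝ) : EReal) * h y) :
    ∀ (s₁ s₂ : EuclideanSpace ℝ (Fin p)) (a b : ℝ), 0 ≤ a → 0 ≤ b → a + b = 1 →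
      (⨅ x ∈ {x | C x = a • s₁ + b • s₂}, h x)
          + (((σ / ‖C‖ ^ 2) / 2 * (a * b) * ‖s₁ - s₂‖ ^ 2 : ℝ) : EReal)
        ≤ ((a : ℝ) : EReal) * (⨅ x ∈ {x | C x = s₁}, h x)
          + ((b : ℝ) : EReal) * (⨅ x ∈ {x | C x = s₂}, h x) := by
  intro s₁ s₂ a b ha hb hab
  obtain ⟨m, hm⟩ := aux_bddBelow_of_strconv h σ hσ hproper hbot hlsc hstrconv
  rcases ha.eq_or_lt with ha0 | hapos
  · -- a = 0, b = 1
    have hb1 : b = 1 := by linarith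
    rw [← ha0, hb1]
    simp
  rcases hb.eq_or_lt with hb0 | hbpos
  · -- b = 0, a = 1
    have ha1 : a = 1 := by linarith
    rw [← hb0, ha1]
    simp
  -- both positive
  set A : EReal := ⨅ x ∈ {x | C x = s₁}, h x with hAdef
  set B : EReal := ⨅ x ∈ {x | C x = s₂}, h x with hBdef
  set L : EReal := ⨅ x ∈ {x | C x = a • s₁ + b • s₂}, h x with hLdef
  have hmA : (m : EReal) ≤ A := le_iInf₂ fun x _ => hm x
  have hmB : (m : EReal) ≤ B := le_iInf₂ fun x _ => hm x
  have hAbot : A ≠ ⊥ := fun hc => by simp [hc] at hmA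
  have hBbot : B ≠ ⊥ := fun hc => by simp [hc] at hmB
  have haE : (0 : EReal) < ((a : ℝ) : EReal) := by exact_mod_cast hapos
  have hbE : (0 : EReal) < ((b : ℝ) : EReal) := by exact_mod_cast hbpos
  have hmulbot : ∀ (c : ℝ) (X : EReal), 0 < c → X ≠ ⊥ → ((c : ℝ) : EReal) * X ≠ ⊥ := by
    intro c X hc hX
    by_cases hXt : X = ⊤
    · rw [hXt, EReal.mul_top_of_pos (by exact_mod_cast hc)]
      exact (bot_lt_top).ne'
    · have hXr : X = ((X.toReal : ℝ) : EReal) := (EReal.coe_toReal hXt hX).symm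
      rw [hXr, ← EReal.coe_mul]
      exact EReal.coe_ne_bot _
  by_cases hAtop : A = ⊤
  · rw [hAtop, EReal.mul_top_of_pos haE, EReal.top_add_of_ne_bot (hmulbot b B hbpos hBbot)]
    exact le_top
  by_cases hBtop : B = ⊤
  · rw [hBtop, EReal.mul_top_of_pos hbE, EReal.add_top_of_ne_bot (hmulbot a A hapos hAbot)]
    exact le_top
  set A₀ : ℝ := A.toReal with hA₀def
  set B₀ : ℝ := B.toReal with hB₀def
  have hAeq : A = ((A₀ : ℝ) : EReal) := (EReal.coe_toReal hAtop hAbot).symm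
  have hBeq : B = ((B₀ : ℝ) : EReal) := (EReal.coe_toReal hBtop hBbot).symm
  rw [hAeq, hBeq, ← EReal.coe_mul, ← EReal.coe_mul, ← EReal.coe_add]
  set r : ℝ := σ / ‖C‖ ^ 2 / 2 * (a * b) * ‖s₁ - s₂‖ ^ 2 with hrdef
  set T : ℝ := a * A₀ + b * B₀ with hTdef
  have key : ∀ ε : ℝ, 0 < ε → L + ((r : ℝ) : EReal) ≤ ((T + ε : ℝ) : EReal) := by
    intro ε hε
    -- pick near-optimal points
    obtain ⟨x₁, hx₁S, hx₁⟩ : ∃ x, C x = s₁ ∧ h x < ((A₀ + ε : ℝ) : EReal) := by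
      by_contra hc
      push_neg at hc
      have : ((A₀ + ε : ℝ) : EReal) ≤ A := le_iInf₂ fun x hx => hc x hx
      rw [hAeq] at this
      have := EReal.coe_le_coe_iff.mp this
      linarith
    obtain ⟨x₂, hx₂S, hx₂⟩ : ∃ x, C x = s₂ ∧ h x < ((B₀ + ε : ℝ) : EReal) := by
      by_contra hc
      push_neg at hc
      have : ((B₀ + ε : ℝ) : EReal) ≤ B := le_iInf₂ fun x hx => hc x hx
      rw [hBeq] at this
      have := EReal.coe_le_coe_iff.mp this
      linarith
    have hx₁top : h x₁ ≠ ⊤ := fun hc => by rw [hc] at hx₁; exact (not_top_lt hx₁)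
    have hx₂top : h x₂ ≠ ⊤ := fun hc => by rw [hc] at hx₂; exact (not_top_lt hx₂)
    set v₁ : ℝ := (h x₁).toReal with hv₁def
    set v₂ : ℝ := (h x₂).toReal with hv₂def
    have hv₁ : h x₁ = ((v₁ : ℝ) : EReal) := (EReal.coe_toReal hx₁top (hbot x₁)).symm
    have hv₂ : h x₂ = ((v₂ : ℝ) : EReal) := (EReal.coe_toReal hx₂top (hbot x₂)).symm
    have hv₁lt : v₁ < A₀ + ε := by rw [hv₁] at hx₁; exact EReal.coe_lt_coe_iff.mp hx₁
    have hv₂lt : v₂ < B₀ + ε := by rw [hv₂] at hx₂; exact EReal.coe_lt_coe_iff.mp hx₂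
    set z : EuclideanSpace ℝ (Fin n) := a • x₁ + b • x₂ with hzdef
    have hzmem : z ∈ {x | C x = a • s₁ + b • s₂} := by
      simp only [Set.mem_setOf_eq, hzdef, map_add, map_smul, hx₁S, hx₂S]
    have hL : L ≤ h z := iInf₂_le z hzmem
    have hsc := hstrconv x₁ x₂ a b ha hb hab
    rw [← hzdef, hv₁, hv₂, ← EReal.coe_mul, ← EReal.coe_mul, ← EReal.coe_add] at hsc
    set D : ℝ := ‖x₁ - x₂‖ with hDdef
    set q : ℝ := σ / 2 * (a * b) * D ^ 2 with hqdef
    have hr : r ≤ q := by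
      have h1 : ‖s₁ - s₂‖ ≤ ‖C‖ * D := by
        rw [← hx₁S, ← hx₂S, ← map_sub]
        exact C.le_opNorm _
      by_cases hC : ‖C‖ = 0
      · have h2 : ‖s₁ - s₂‖ = 0 := le_antisymm (by rw [hC, zero_mul] at h1; exact h1) (norm_nonneg _)
        rw [hrdef, h2]
        have : (0:ℝ) ≤ q := by positivity
        simpa using this
      have hCpos : 0 < ‖C‖ := lt_of_le_of_ne (norm_nonneg _) (Ne.symm hC)
      have h2 : ‖s₁ - s₂‖ ^ 2 ≤ (‖C‖ * D) ^ 2 :=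
        pow_le_pow_left₀ (norm_nonneg _) h1 2
      have h3 : r ≤ σ / ‖C‖ ^ 2 / 2 * (a * b) * (‖C‖ * D) ^ 2 := by
        rw [hrdef]
        apply mul_le_mul_of_nonneg_left h2
        positivity
      have h4 : σ / ‖C‖ ^ 2 / 2 * (a * b) * (‖C‖ * D) ^ 2 = q := by
        rw [hqdef]
        field_simp
      linarith
    calc L + ((r : ℝ) : EReal) ≤ h z + ((q : ℝ) : EReal) :=
            add_le_add hL (EReal.coe_le_coe_iff.mpr hr)
      _ ≤ ((a * v₁ + b * v₂ : ℝ) : EReal) := hsc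
      _ ≤ ((T + ε : ℝ) : EReal) := by
            rw [EReal.coe_le_coe_iff, hTdef]
            nlinarith [mul_le_mul_of_nonneg_left hv₁lt.le ha,
              mul_le_mul_of_nonneg_left hv₂lt.le hb]
  by_contra hcon
  push_neg at hcon
  obtain ⟨c, hc1, hc2⟩ := EReal.lt_iff_exists_real_btwn.mp hcon
  have hεpos : 0 < c - T := by
    have := EReal.coe_lt_coe_iff.mp hc1
    linarith
  have := key (c - T) hεpos
  rw [show T + (c - T) = c by ring] at this
  exact absurd (lt_of_le_of_lt this hc2) (lt_irrefl _)
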